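/- Let V be a Hilbert space over ℂ (or ℝ), let W ⊆ V be a linear subspace, let I ⊆ ℝ be an interval containing 0, and let g be a map from I × V into the space of linear operators from W to V. Let X : I → W be a map that is differentiable as a map into V and satisfies X′(t) = g(t, X(t))(X(t)) for all t ∈ I. Let ζ ∈ ℝ be such that g(t,w) + ζ is negative semidefinite for all t ∈ I and w ∈ V, i.e., Re⟨g(t,w)v, v⟩ + ζ‖v‖² ≤ 0 for all v ∈ W. Then for all t ∈ I with t ≥ 0, ‖X(t)‖_V ≤ ‖X(0)‖_V · e^{−ζt}. -/

import Mathlib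

/-- Let `V` be a Hilbert space, `W ⊆ V` a linear subspace, `I ⊆ ℝ` an
interval containing `0`, and `g : I × V → (linear operators W → V)`. Let `X : I → W` be
differentiable (into `V`) with `X′(t) = g(t, X(t))(X(t))` on `I`. If `ζ ∈ ℝ` is such that
`g(t,w) + ζ` is negative semidefinite for all `t ∈ I`, `w ∈ V` (i.e.
`Re⟨g(t,w)v, v⟩ + ζ‖v‖² ≤ 0` for all `v ∈ W`), then `‖X(t)‖ ≤ ‖X(0)‖ e^{−ζ t}` for all
`t ∈ I` with `t ≥ 0`. -/
theorem norm_le_of_negative_semidefinite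
    {𝕜 V : Type*} [RCLike 𝕜] [NormedAddCommGroup V] [InnerProductSpace 𝕜 V]
    [NormedSpace ℝ V] [IsScalarTower ℝ 𝕜 V]
    (W : Submodule 𝕜 V) (I : Set ℝ) (hI : I.OrdConnected) (h0 : (0 : ℝ) ∈ I)
    (g : ℝ → V → (W →ₗ[𝕜] V)) (X : ℝ → V)
    (hXW : ∀ t ∈ I, X t ∈ W)
    (hX : ∀ t, ∀ ht : t ∈ I, HasDerivWithinAt X (g t (X t) ⟨X t, hXW t ht⟩) I t)
    (ζ : ℝ)
    (hζ : ∀ t ∈ I, ∀ v : V, ∀ w : W,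
      RCLike.re (inner 𝕜 (g t v w) (w : V) : 𝕜) + ζ * ‖(w : V)‖ ^ 2 ≤ 0) :
    ∀ t ∈ I, 0 ≤ t → ‖X t‖ ≤ ‖X 0‖ * Real.exp (-ζ * t) := by
  intro t ht ht0
  set φ : ℝ → ℝ := fun s => ‖X s‖ ^ 2 * Real.exp (2 * ζ * s) with hφdef
  -- derivative of φ within I
  have hφ : ∀ s, ∀ hs : s ∈ I, HasDerivWithinAt φ
      ((RCLike.re (inner 𝕜 (X s) (g s (X s) ⟨X s, hXW s hs⟩) : 𝕜)
        + RCLike.re (inner 𝕜 (g s (X s) ⟨X s, hXW s hs⟩) (X s) : 𝕜))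
        * Real.exp (2 * ζ * s)
        + ‖X s‖ ^ 2 * (Real.exp (2 * ζ * s) * (2 * ζ))) I s := by
    intro s hs
    have h1 : HasDerivWithinAt (fun u => RCLike.re (inner 𝕜 (X u) (X u) : 𝕜))
        (RCLike.re (inner 𝕜 (X s) (g s (X s) ⟨X s, hXW s hs⟩) : 𝕜)
          + RCLike.re (inner 𝕜 (g s (X s) ⟨X s, hXW s hs⟩) (X s) : 𝕜)) I s := by
      have := ((hX s hs).inner 𝕜 (hX s hs))
      have h2 := (RCLike.reCLM (K := 𝕜)).hasFDerivAt.comp_hasDerivWithinAt s this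
      simpa [Function.comp_def] using h2
    have h1' : HasDerivWithinAt (fun u => ‖X u‖ ^ 2)
        (RCLike.re (inner 𝕜 (X s) (g s (X s) ⟨X s, hXW s hs⟩) : 𝕜)
          + RCLike.re (inner 𝕜 (g s (X s) ⟨X s, hXW s hs⟩) (X s) : 𝕜)) I s := by
      have heq : (fun u => ‖X u‖ ^ 2) = fun u => RCLike.re (inner 𝕜 (X u) (X u) : 𝕜) := by
        funext u
        rw [← @inner_self_eq_norm_sq 𝕜]
      rw [heq]; exact h1
    have hexp : HasDerivWithinAt (fun u => Real.exp (2 * ζ * u))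
        (Real.exp (2 * ζ * s) * (2 * ζ)) I s := by
      have := ((hasDerivAt_id s).const_mul (2 * ζ)).exp
      simpa [mul_comm] using this.hasDerivWithinAt
    exact h1'.mul hexp
  -- the derivative is nonpositive
  have hderiv_nonpos : ∀ s, ∀ hs : s ∈ I,
      (RCLike.re (inner 𝕜 (X s) (g s (X s) ⟨X s, hXW s hs⟩) : 𝕜)
        + RCLike.re (inner 𝕜 (g s (X s) ⟨X s, hXW s hs⟩) (X s) : 𝕜))
        * Real.exp (2 * ζ * s)
        + ‖X s‖ ^ 2 * (Real.exp (2 * ζ * s) * (2 * ζ)) ≤ 0 := by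
    intro s hs
    have hkey := hζ s hs (X s) ⟨X s, hXW s hs⟩
    have hsymm : RCLike.re (inner 𝕜 (X s) (g s (X s) ⟨X s, hXW s hs⟩) : 𝕜)
        = RCLike.re (inner 𝕜 (g s (X s) ⟨X s, hXW s hs⟩) (X s) : 𝕜) := by
      rw [inner_re_symm]
    have hpos : (0:ℝ) < Real.exp (2 * ζ * s) := Real.exp_pos _
    simp only [Submodule.coe_mk] at hkey
    nlinarith [hkey, hpos]
  have hconv : Convex ℝ I := hI.convex
  -- φ is antitone on I
  have hcont : ContinuousOn φ I := fun s hs => (hφ s hs).continuousWithinAt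
  have hanti : AntitoneOn φ I := by
    apply antitoneOn_of_deriv_nonpos hconv hcont
    · intro s hs
      exact ((hφ s (interior_subset hs)).hasDerivAt (mem_interior_iff_mem_nhds.mp hs)).differentiableAt.differentiableWithinAt
    intro s hs
    have hsI : s ∈ I := interior_subset hs
    have hd : HasDerivAt φ _ s := (hφ s hsI).hasDerivAt (mem_interior_iff_mem_nhds.mp hs)
    rw [hd.deriv]
    exact hderiv_nonpos s hsI
  have hle : φ t ≤ φ 0 := hanti h0 ht ht0
  have hφ0 : φ 0 = ‖X 0‖ ^ 2 := by simp [hφdef]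
  have hrhs : (0:ℝ) ≤ ‖X 0‖ * Real.exp (-ζ * t) := by positivity
  have hsq : ‖X t‖ ^ 2 ≤ (‖X 0‖ * Real.exp (-ζ * t)) ^ 2 := by
    have hexp : Real.exp (-ζ * t) ^ 2 = Real.exp (-(2 * ζ * t)) := by
      rw [← Real.exp_nat_mul]; ring_nf
    have hpos : (0:ℝ) < Real.exp (2 * ζ * t) := Real.exp_pos _
    rw [mul_pow, hexp, Real.exp_neg]
    rw [hφ0] at hle
    calc ‖X t‖ ^ 2 = φ t * (Real.exp (2 * ζ * t))⁻¹ := by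
          field_simp [hφdef]
          simp [hφdef]
      _ ≤ ‖X 0‖ ^ 2 * (Real.exp (2 * ζ * t))⁻¹ := by
          apply mul_le_mul_of_nonneg_right hle (by positivity)
  exact le_of_pow_le_pow_left₀ two_ne_zero hrhs hsq
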